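/- For the single-card chain K, starting from the bottom position n, the total variation distance satisfies ‖K^t(n,·) − u‖_TV = (1 − 1/n)^{t+1} for all t ≥ 0. -/

import Mathlib

open Finset


lemma tailsum (n : ℕ) : ∀ d b : ℕ, b + d = n →
    ∑ a ∈ Ico b n, (∑ k ∈ Icc (a+1) n, (1:ℝ)/k) =
      ((n:ℝ) - b) - (b:ℝ) * ∑ k ∈ Icc (b+1) n, (1:ℝ)/k := by
  intro d
  induction d with
  | zero =>
      intro b hb
      have hbn : b = n := by omega
      subst hbn
      rw [Ico_self, sum_empty]
      have : Icc (b+1) b = ∅ := by rw [Finset.Icc_eq_empty]; omega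
      rw [this, sum_empty]
      ring
  | succ d ih =>
      intro b hb
      have hbn : b < n := by omega
      rw [Finset.sum_eq_sum_Ico_succ_bot hbn, ih (b+1) (by omega)]
      have hsplit : ∑ k ∈ Icc (b+1) n, (1:ℝ)/k
          = 1/((b:ℝ)+1) + ∑ k ∈ Icc (b+2) n, (1:ℝ)/k := by
        rw [← Finset.Ico_add_one_right_eq_Icc, Finset.sum_eq_sum_Ico_succ_bot (by omega), Finset.Ico_add_one_right_eq_Icc]
        push_cast
        ring
      rw [hsplit]
      push_cast
      have hb1 : ((b:ℝ)+1) ≠ 0 := by positivity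
      field_simp
      ring

lemma colsum (n : ℕ) (hn : 2 ≤ n) (K : Matrix (Fin n) (Fin n) ℝ)
    (hK : ∀ i j : Fin n,
      K i j =
        if i = j then
          (1 / (n : ℝ)) * ∑ k ∈ Finset.Icc (j.val + 1) n, 1 / (k : ℝ) + (i.val : ℝ) / n
        else if j < i then (1 / (n : ℝ)) * ∑ k ∈ Finset.Icc (i.val + 1) n, 1 / (k : ℝ)
        else (1 / (n : ℝ)) * ∑ k ∈ Finset.Icc (j.val + 1) n, 1 / (k : ℝ))
    (j : Fin n) : ∑ i : Fin n, K i j = 1 := by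
  set b := j.val with hbdef
  have hb : b < n := j.isLt
  set g : ℕ → ℝ := fun a =>
    if a = b then (1 / (n : ℝ)) * ∑ k ∈ Finset.Icc (b + 1) n, 1 / (k : ℝ) + (a : ℝ) / n
    else if b < a then (1 / (n : ℝ)) * ∑ k ∈ Finset.Icc (a + 1) n, 1 / (k : ℝ)
    else (1 / (n : ℝ)) * ∑ k ∈ Finset.Icc (b + 1) n, 1 / (k : ℝ) with hgdef
  have hKg : ∀ i : Fin n, K i j = g i.val := by
    intro i
    rw [hK i j, hgdef]
    simp only [Fin.ext_iff, Fin.lt_def]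
    rw [hbdef]
  calc ∑ i : Fin n, K i j = ∑ a ∈ range n, g a := by
        rw [← Fin.sum_univ_eq_sum_range g n]
        exact Finset.sum_congr rfl fun i _ => hKg i
    _ = 1 := by
        rw [range_eq_Ico, ← Finset.sum_Ico_consecutive _ (Nat.zero_le (b+1)) hb,
          ← range_eq_Ico]
        rw [Finset.sum_range_succ]
        have h1 : ∑ a ∈ range b, g a = (b:ℝ) * ((1 / (n : ℝ)) * ∑ k ∈ Finset.Icc (b + 1) n, 1 / (k : ℝ)) := by
          have h1a : ∀ a ∈ range b, g a = (1 / (n : ℝ)) * ∑ k ∈ Finset.Icc (b + 1) n, 1 / (k : ℝ) := by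
            intro a ha
            rw [Finset.mem_range] at ha
            rw [hgdef]
            simp only [if_neg (by omega : ¬ a = b), if_neg (by omega : ¬ b < a)]
          rw [Finset.sum_congr rfl h1a, Finset.sum_const, Finset.card_range, nsmul_eq_mul]
        have h2a : ∀ a ∈ Ico (b+1) n, g a = (1 / (n : ℝ)) * ∑ k ∈ Finset.Icc (a + 1) n, 1 / (k : ℝ) := by
          intro a ha
          rw [Finset.mem_Ico] at ha
          rw [hgdef]
          simp only [if_neg (by omega : ¬ a = b), if_pos (by omega : b < a)]
        have h2 : ∑ a ∈ Ico (b+1) n, g a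
            = (1 / (n : ℝ)) * (((n:ℝ) - ((b:ℝ)+1)) - ((b:ℝ)+1) * ∑ k ∈ Icc (b+2) n, (1:ℝ)/k) := by
          rw [Finset.sum_congr rfl h2a, ← Finset.mul_sum, tailsum n (n - (b+1)) (b+1) (by omega)]
          push_cast
          ring
        have hgb : g b = (1 / (n : ℝ)) * ∑ k ∈ Finset.Icc (b + 1) n, 1 / (k : ℝ) + (b : ℝ) / n := by
          rw [hgdef]; simp
        rw [h1, h2, hgb]
        have hsplit : ∑ k ∈ Icc (b+1) n, (1:ℝ)/k
            = 1/((b:ℝ)+1) + ∑ k ∈ Icc (b+2) n, (1:ℝ)/k := by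
          rw [← Finset.Ico_add_one_right_eq_Icc, Finset.sum_eq_sum_Ico_succ_bot (by omega), Finset.Ico_add_one_right_eq_Icc]
          push_cast
          ring
        rw [hsplit]
        have hn0 : (n:ℝ) ≠ 0 := by positivity
        have hb1 : ((b:ℝ)+1) ≠ 0 := by positivity
        field_simp
        ring

lemma rowform (n : ℕ) (hn : 2 ≤ n) (K : Matrix (Fin n) (Fin n) ℝ)
    (hK : ∀ i j : Fin n,
      K i j =
        if i = j then
          (1 / (n : ℝ)) * ∑ k ∈ Finset.Icc (j.val + 1) n, 1 / (k : ℝ) + (i.val : ℝ) / n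
        else if j < i then (1 / (n : ℝ)) * ∑ k ∈ Finset.Icc (i.val + 1) n, 1 / (k : ℝ)
        else (1 / (n : ℝ)) * ∑ k ∈ Finset.Icc (j.val + 1) n, 1 / (k : ℝ))
    (t : ℕ) (j : Fin n) :
    (K ^ t) (⟨n - 1, Nat.sub_lt (by omega) Nat.one_pos⟩ : Fin n) j =
      (1 - (1 - 1/(n:ℝ))^t)/n + (1 - 1/(n:ℝ))^t * (if j = (⟨n - 1, Nat.sub_lt (by omega) Nat.one_pos⟩ : Fin n) then 1 else 0) := by
  set bn : Fin n := ⟨n - 1, by omega⟩ with hbn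
  have hn0 : (n:ℝ) ≠ 0 := by positivity
  have hKrow : ∀ j : Fin n, K bn j =
      (1/(n:ℝ)) * (1/n) + (1 - 1/(n:ℝ)) * (if j = bn then 1 else 0) := by
    intro j
    have hIcc : ∑ k ∈ Finset.Icc (n - 1 + 1) n, 1 / (k : ℝ) = 1/n := by
      rw [show n - 1 + 1 = n from by omega, Finset.Icc_self, Finset.sum_singleton]
    rw [hK bn j]
    by_cases hj : j = bn
    · subst hj
      rw [if_pos rfl, if_pos rfl, hbn]
      simp only [hIcc]
      have : ((n - 1 : ℕ) : ℝ) = (n:ℝ) - 1 := by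
        rw [Nat.cast_sub (by omega), Nat.cast_one]
      rw [this]
      field_simp
    · have hne : bn ≠ j := fun h => hj h.symm
      have hlt : j < bn := by
        rw [Fin.lt_def]
        show j.val < n - 1
        have h1 := j.isLt
        have h2 : j.val ≠ n - 1 := fun h => hj (Fin.ext h)
        omega
      rw [if_neg hne, if_pos hlt, if_neg hj, hbn]
      simp only [hIcc]
      ring
  induction t generalizing j with
  | zero =>
      simp only [pow_zero, Matrix.one_apply]
      by_cases hj : bn = j
      · rw [if_pos hj, if_pos hj.symm]; ring
      · rw [if_neg hj, if_neg (fun h => hj h.symm)]; ring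
  | succ t ih =>
      rw [pow_succ, Matrix.mul_apply]
      have : ∀ i : Fin n, (K ^ t) bn i * K i j =
          (1 - (1 - 1/(n:ℝ))^t)/n * K i j
            + (if i = bn then (1 - 1/(n:ℝ))^t * K i j else 0) := by
        intro i
        rw [ih i]
        by_cases hi : i = bn
        · simp only [if_pos hi]; ring
        · simp only [if_neg hi]; ring
      rw [Finset.sum_congr rfl fun i _ => this i, Finset.sum_add_distrib,
        ← Finset.mul_sum, colsum n hn K hK j, Finset.sum_ite_eq' univ bn,
        if_pos (Finset.mem_univ bn), hKrow j]
      split_ifs <;> ring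


/-- For the single-card chain K of the hit-and-run top-to-random shuffle,
starting from the bottom position n,
‖K^t(n,·) − u‖_TV = (1 − 1/n)^{t+1} for all t ≥ 0. -/
theorem stmt_16 (n : ℕ) (hn : 2 ≤ n) (K : Matrix (Fin n) (Fin n) ℝ)
    (hK : ∀ i j : Fin n,
      K i j =
        if i = j then
          (1 / (n : ℝ)) * ∑ k ∈ Finset.Icc (j.val + 1) n, 1 / (k : ℝ) + (i.val : ℝ) / n
        else if j < i then (1 / (n : ℝ)) * ∑ k ∈ Finset.Icc (i.val + 1) n, 1 / (k : ℝ)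
        else (1 / (n : ℝ)) * ∑ k ∈ Finset.Icc (j.val + 1) n, 1 / (k : ℝ))
    (t : ℕ) :
    (1 / 2) * ∑ j : Fin n, |(K ^ t) (⟨n - 1, by omega⟩ : Fin n) j - 1 / (n : ℝ)| =
      (1 - 1 / (n : ℝ)) ^ (t + 1) := by
  set bn : Fin n := ⟨n - 1, by omega⟩ with hbn
  set c : ℝ := 1 - 1/(n:ℝ) with hc
  have hn0 : (n:ℝ) ≠ 0 := by positivity
  have hn1 : 1/(n:ℝ) ≤ 1 := by
    rw [div_le_one (by positivity)]
    exact_mod_cast Nat.one_le_of_lt hn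
  have hc0 : 0 ≤ c := by rw [hc]; linarith
  have habs : ∀ j : Fin n, |(K ^ t) bn j - 1 / (n : ℝ)| =
      if j = bn then c^t * (1 - 1/n) else c^t * (1/n) := by
    intro j
    rw [rowform n hn K hK t j]
    by_cases hj : j = bn
    · rw [if_pos hj, if_pos hj]
      rw [abs_of_nonneg]
      · ring
      · have : (1 - c^t)/(n:ℝ) + c^t * 1 - 1/n = c^t * (1 - 1/n) := by ring
        rw [this]
        positivity
    · rw [if_neg hj, if_neg hj]
      rw [show (1 - c^t)/(n:ℝ) + c^t * 0 - 1/n = -(c^t * (1/n)) from by ring, abs_neg,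
        abs_of_nonneg (by positivity)]
  rw [Finset.sum_congr rfl fun j _ => habs j, Finset.sum_ite, Finset.filter_eq',
    if_pos (Finset.mem_univ bn), Finset.filter_ne', Finset.sum_singleton, Finset.sum_const,
    Finset.card_erase_of_mem (Finset.mem_univ bn), Finset.card_univ, Fintype.card_fin,
    nsmul_eq_mul]
  have : ((n - 1 : ℕ) : ℝ) = (n:ℝ) - 1 := by
    rw [Nat.cast_sub (by omega), Nat.cast_one]
  rw [this, pow_succ, hc]
  field_simp
  ring
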